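/- Let a, σ > 0, b ≥ 0, τ > 0, T ∈ ℝ, and let w ∈ [0, (k(0)−a)/σ²) where k(x) := √(a² + 2(1+b·x)·σ²), so k(0) = √(a²+2σ²). Then there exists a unique sequence of differentiable functions (φⱼ)ⱼ≥₀, with φ₀ : [T−τ, T] → ℝ and φⱼ : [T−(j+1)τ, T−jτ] → ℝ for j ≥ 1, such that: φ₀(T) = w and φ₀′(t) = (σ²/2)·φ₀(t)² + a·φ₀(t) − 1 for all t ∈ [T−τ, T]; and for every j ≥ 1, φⱼ(T−jτ) = φⱼ₋₁(T−jτ) and φⱼ′(t) = (σ²/2)·φⱼ(t)² + a·φⱼ(t) − 1 − b·φⱼ₋₁(t+τ) for all t ∈ [T−(j+1)τ, T−jτ]. Moreover each φⱼ is nonnegative, and φⱼ(t) > 0 for all t < T. -/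

import Mathlib

set_option maxHeartbeats 1000000
open Set Filter Topology


/-- The domain [T−(j+1)τ, T−jτ] of the j-th component of the recursive delayed
Riccati system. -/
def riccatiDom (T τ : ℝ) (j : ℕ) : Set ℝ :=
  Set.Icc (T - ((j : ℝ) + 1) * τ) (T - (j : ℝ) * τ)

/-- The recursive delayed Riccati system with delay τ, horizon T and final datum w:
φ₀′ = (σ²/2)φ₀² + aφ₀ − 1 on [T−τ,T] with φ₀(T) = w, and for j ≥ 1,
φⱼ′ = (σ²/2)φⱼ² + aφⱼ − 1 − b·φⱼ₋₁(t+τ) on [T−(j+1)τ, T−jτ] with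
φⱼ(T−jτ) = φⱼ₋₁(T−jτ). -/
def DelayedRiccatiSol (a b σ τ T w : ℝ) (φ : ℕ → ℝ → ℝ) : Prop :=
  φ 0 T = w ∧
  (∀ t ∈ riccatiDom T τ 0, HasDerivWithinAt (φ 0)
    (σ ^ 2 / 2 * (φ 0 t) ^ 2 + a * φ 0 t - 1) (riccatiDom T τ 0) t) ∧
  (∀ j : ℕ, φ (j + 1) (T - ((j : ℝ) + 1) * τ) = φ j (T - ((j : ℝ) + 1) * τ)) ∧
  (∀ j : ℕ, ∀ t ∈ riccatiDom T τ (j + 1), HasDerivWithinAt (φ (j + 1))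
    (σ ^ 2 / 2 * (φ (j + 1) t) ^ 2 + a * φ (j + 1) t - 1 - b * φ j (t + τ))
    (riccatiDom T τ (j + 1)) t)


section RiccatiAux
open Set Filter Topology

lemma deriv_nonneg_of_min {f : ℝ → ℝ} {α β t d : ℝ} (htβ : t < β) (htα : α ≤ t)
    (hd : HasDerivWithinAt f d (Icc α β) t)
    (hmin : ∀ x ∈ Ioc t β, f t ≤ f x) : 0 ≤ d := by
  have hsub : Ioc t β ⊆ Icc α β \ {t} :=
    fun x hx => ⟨⟨htα.trans hx.1.le, hx.2⟩, ne_of_gt hx.1⟩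
  have hle : 𝓝[Ioc t β] t ≤ 𝓝[Icc α β \ {t}] t := nhdsWithin_mono _ hsub
  have htend := (hasDerivWithinAt_iff_tendsto_slope.mp hd).mono_left hle
  haveI : (𝓝[Ioc t β] t).NeBot := by
    rw [nhdsWithin_Ioc_eq_nhdsGT htβ]; infer_instance
  refine ge_of_tendsto htend ?_
  filter_upwards [self_mem_nhdsWithin] with x hx
  rw [slope_def_field]
  exact div_nonneg (sub_nonneg.2 (hmin x hx)) (sub_nonneg.2 hx.1.le)

lemma deriv_nonpos_of_max {f : ℝ → ℝ} {α β t d : ℝ} (htβ : t < β) (htα : α ≤ t)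
    (hd : HasDerivWithinAt f d (Icc α β) t)
    (hmax : ∀ x ∈ Ioc t β, f x ≤ f t) : d ≤ 0 := by
  have := deriv_nonneg_of_min (f := fun s => -f s) (d := -d) htβ htα hd.neg
    (fun x hx => neg_le_neg (hmax x hx))
  linarith

lemma barrier_lt {f F : ℝ → ℝ} {α β c : ℝ} (hαβ : α < β)
    (hd : ∀ t ∈ Icc α β, HasDerivWithinAt f (F t) (Icc α β) t)
    (hβ : f β < c)
    (hc : ∀ t ∈ Ico α β, f t = c → 0 < F t) :
    ∀ t ∈ Icc α β, f t < c := by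
  have hf : ContinuousOn f (Icc α β) := fun t ht => (hd t ht).continuousWithinAt
  by_contra h
  push_neg at h
  obtain ⟨t₀, ht₀, hct₀⟩ := h
  set S : Set ℝ := {t ∈ Icc α β | c ≤ f t} with hS
  have hSne : S.Nonempty := ⟨t₀, ht₀, hct₀⟩
  have hSbdd : BddAbove S := ⟨β, fun x hx => hx.1.2⟩
  set t₁ := sSup S with ht₁def
  have ht₁Icc : t₁ ∈ Icc α β := by
    constructor
    · exact le_csSup hSbdd ⟨ht₀, hct₀⟩ |>.trans' ht₀.1
    · exact csSup_le hSne (fun x hx => hx.1.2)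
  have ht₁cl : t₁ ∈ closure S := csSup_mem_closure hSne hSbdd
  haveI : (𝓝[S] t₁).NeBot := mem_closure_iff_nhdsWithin_neBot.mp ht₁cl
  have hcS : c ≤ f t₁ := by
    have htd : Tendsto f (𝓝[S] t₁) (𝓝 (f t₁)) := (hf t₁ ht₁Icc).mono (fun x hx => hx.1)
    refine ge_of_tendsto htd ?_
    filter_upwards [self_mem_nhdsWithin] with x hx using hx.2
  have ht₁β : t₁ < β := lt_of_le_of_ne ht₁Icc.2 (fun h => absurd (h ▸ hcS) (not_le.2 hβ))
  have hlt : ∀ x ∈ Ioc t₁ β, f x < c := by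
    intro x hx
    by_contra hcx
    push_neg at hcx
    have hxS : x ∈ S := ⟨⟨ht₁Icc.1.trans hx.1.le, hx.2⟩, hcx⟩
    exact absurd (le_csSup hSbdd hxS) (not_le.2 hx.1)
  have hft₁ : f t₁ ≤ c := by
    haveI : (𝓝[Ioc t₁ β] t₁).NeBot := by
      rw [nhdsWithin_Ioc_eq_nhdsGT ht₁β]; infer_instance
    have htd : Tendsto f (𝓝[Ioc t₁ β] t₁) (𝓝 (f t₁)) :=
      (hf t₁ ht₁Icc).mono (fun x hx => ⟨ht₁Icc.1.trans hx.1.le, hx.2⟩)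
    refine le_of_tendsto htd ?_
    filter_upwards [self_mem_nhdsWithin] with x hx using (hlt x hx).le
  have hft₁' : f t₁ = c := le_antisymm hft₁ hcS
  have hFpos := hc t₁ ⟨ht₁Icc.1, ht₁β⟩ hft₁'
  have hFnonpos : F t₁ ≤ 0 := by
    refine deriv_nonpos_of_max ht₁β ht₁Icc.1 (hd t₁ ht₁Icc) (fun x hx => ?_)
    rw [hft₁']; exact (hlt x hx).le
  linarith

lemma barrier_gt {f F : ℝ → ℝ} {α β c : ℝ} (hαβ : α < β)
    (hd : ∀ t ∈ Icc α β, HasDerivWithinAt f (F t) (Icc α β) t)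
    (hβ : c < f β)
    (hc : ∀ t ∈ Ico α β, f t = c → F t < 0) :
    ∀ t ∈ Icc α β, c < f t := by
  intro t ht
  have := barrier_lt (f := fun s => -f s) (F := fun s => -F s) (c := -c) hαβ
    (fun s hs => (hd s hs).neg) (by show -f β < -c; linarith)
    (fun s hs h0 => by
      have hfs : f s = c := by linarith [neg_eq_iff_eq_neg.mp h0]
      simpa using hc s hs hfs) t ht
  simpa using this

lemma riccati_step {a σ : ℝ} (ha : 0 < a) (hσ : 0 < σ) {α β : ℝ} (hαβ : α < β)
    {r : ℝ → ℝ} (hrc : ContinuousOn r (Icc α β)) (hr1 : ∀ t ∈ Icc α β, 1 ≤ r t)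
    {w : ℝ} (hw : 0 ≤ w) :
    ∃ f : ℝ → ℝ, f β = w ∧
      (∀ t ∈ Icc α β, HasDerivWithinAt f (σ ^ 2 / 2 * f t ^ 2 + a * f t - r t) (Icc α β) t) ∧
      (∀ t ∈ Icc α β, 0 ≤ f t) ∧ (∀ t ∈ Ico α β, 0 < f t) := by
  obtain ⟨Rb, hRb⟩ := isCompact_Icc.exists_bound_of_continuousOn hrc
  have hRb0 : 0 ≤ Rb := le_trans (norm_nonneg _) (hRb β ⟨hαβ.le, le_refl β⟩)
  have hrle : ∀ t ∈ Icc α β, r t ≤ Rb := fun t ht =>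
    (abs_le.mp (by simpa [Real.norm_eq_abs] using hRb t ht)).2
  set c := max w (Rb / a) with hcdef
  have hc0 : 0 ≤ c := le_trans hw (le_max_left _ _)
  have hwc : w ≤ c := le_max_left _ _
  have hac : Rb ≤ a * c := by
    have h1 := le_max_right w (Rb / a)
    rw [div_le_iff₀ ha] at h1; linarith
  set π : ℝ → ℝ := fun x => max (-1) (min x (c + 1)) with hπ
  have hπle : ∀ x, -1 ≤ π x ∧ π x ≤ c + 1 := fun x =>
    ⟨le_max_left _ _, max_le (by linarith) (min_le_right _ _)⟩
  have hπabs : ∀ x, |π x| ≤ c + 1 := fun x =>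
    abs_le.mpr ⟨by linarith [(hπle x).1], (hπle x).2⟩
  have hπlip : ∀ x y, |π x - π y| ≤ |x - y| := by
    intro x y
    calc |π x - π y| ≤ |min x (c+1) - min y (c+1)| := by
          have h := abs_max_sub_max_le_abs (min x (c+1)) (min y (c+1)) (-1)
          simpa [hπ, max_comm] using h
      _ ≤ |x - y| := by
          have h := abs_min_sub_min_le_max x (c+1) y (c+1)
          simpa using h
  set Kr : ℝ := σ^2*(c+1) + a with hKrdef
  have hKr0 : 0 ≤ Kr := by positivity
  set K : NNReal := Real.toNNReal Kr with hKdef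
  have hKco : (K : ℝ) = Kr := Real.coe_toNNReal _ hKr0
  set C : ℝ := σ^2/2*(c+1)^2 + a*(c+1) + Rb with hCdef
  have hC0 : 0 ≤ C := by positivity
  set R : ℝ := C * (β - α) with hRdef
  set v : ℝ → ℝ → ℝ := fun t x => σ^2/2 * (π x)^2 + a * (π x) - r t with hv
  have hlipv : ∀ t, LipschitzWith K (v t) := by
    intro t
    apply LipschitzWith.of_dist_le_mul
    intro x y
    rw [Real.dist_eq, Real.dist_eq, hKco]
    have hxy : v t x - v t y = (π x - π y) * (σ^2/2 * (π x + π y) + a) := by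
      simp only [hv]; ring
    rw [hxy, abs_mul]
    have h1 : |σ^2/2 * (π x + π y) + a| ≤ Kr := by
      have hx := hπabs x; have hy := hπabs y
      have habs : |π x + π y| ≤ 2*(c+1) := (abs_add_le _ _).trans (by linarith)
      calc |σ^2/2 * (π x + π y) + a| ≤ |σ^2/2 * (π x + π y)| + |a| := abs_add_le _ _
        _ = σ^2/2 * |π x + π y| + a := by
            rw [abs_mul, abs_of_nonneg (by positivity : (0:ℝ) ≤ σ^2/2), abs_of_pos ha]
        _ ≤ Kr := by rw [hKrdef]; nlinarith [sq_nonneg σ]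
    calc |π x - π y| * |σ^2/2*(π x + π y) + a| ≤ |x - y| * Kr :=
          mul_le_mul (hπlip x y) h1 (abs_nonneg _) (abs_nonneg _)
      _ = Kr * |x - y| := mul_comm _ _
  have hpl : IsPicardLindelof v (tmin := α) (tmax := β) ⟨β, hαβ.le, le_refl β⟩ w
      ⟨R, mul_nonneg hC0 (by linarith)⟩ 0 ⟨C, hC0⟩ K :=
    { lipschitzOnWith := fun t _ => (hlipv t).lipschitzOnWith
      continuousOn := fun x _ => continuousOn_const.sub hrc
      norm_le := by
        intro t ht x _
        rw [Real.norm_eq_abs]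
        have hx := hπabs x
        have h2 : |σ^2/2*(π x)^2 + a*(π x)| ≤ σ^2/2*(c+1)^2 + a*(c+1) := by
          calc |σ^2/2*(π x)^2 + a*(π x)| ≤ |σ^2/2*(π x)^2| + |a * π x| := abs_add_le _ _
            _ = σ^2/2*(π x)^2 + a*|π x| := by
                rw [abs_mul, abs_mul, abs_of_nonneg (by positivity : (0:ℝ) ≤ σ^2/2),
                  abs_of_pos ha, abs_of_nonneg (sq_nonneg _)]
            _ ≤ σ^2/2*(c+1)^2 + a*(c+1) := by
                have hsq : (π x)^2 ≤ (c+1)^2 := by nlinarith [sq_abs (π x), abs_nonneg (π x)]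
                have h5 : a*|π x| ≤ a*(c+1) := mul_le_mul_of_nonneg_left hx ha.le
                have h6 : σ^2/2*(π x)^2 ≤ σ^2/2*(c+1)^2 :=
                  mul_le_mul_of_nonneg_left hsq (by positivity)
                linarith
        have h3 : |r t| ≤ Rb := by simpa [Real.norm_eq_abs] using hRb t ht
        calc |v t x| = |(σ^2/2*(π x)^2 + a*(π x)) - r t| := by simp only [hv]
          _ ≤ |σ^2/2*(π x)^2 + a*(π x)| + |r t| := abs_sub _ _
          _ ≤ C := by rw [hCdef]; linarith
      mul_max_le := by
        show C * max (β - β) (β - α) ≤ R - 0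
        rw [sub_zero, sub_self, max_eq_right (by linarith : (0:ℝ) ≤ β - α), hRdef] }
  obtain ⟨f, hfβ, hfd⟩ := hpl.exists_eq_forall_mem_Icc_hasDerivWithinAt₀
  replace hfβ : f β = w := hfβ
  have hupper : ∀ ε, 0 < ε → ε ≤ 1 → ∀ t ∈ Icc α β, f t < c + ε := by
    intro ε hε hε1
    refine barrier_lt (F := fun t => v t (f t)) hαβ hfd (by rw [hfβ]; linarith) ?_
    intro t ht hft
    have hπc : π (c + ε) = c + ε := by
      simp only [hπ]
      rw [min_eq_left (by linarith), max_eq_right (by linarith)]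
    show 0 < v t (f t)
    rw [hft]
    simp only [hv, hπc]
    have hrt := hrle t (Ico_subset_Icc_self ht)
    nlinarith [sq_nonneg (σ*(c+ε)), mul_pos ha hε]
  have hfc : ∀ t ∈ Icc α β, f t ≤ c := by
    intro t ht
    by_contra hgt
    push_neg at hgt
    have hε : 0 < min 1 ((f t - c)/2) := lt_min one_pos (by linarith)
    have h1 := hupper _ hε (min_le_left _ _) t ht
    have h2 : min 1 ((f t - c)/2) ≤ (f t - c)/2 := min_le_right _ _
    linarith
  set ε₀ : ℝ := min 1 (1/σ) with hε₀def
  have hε₀ : 0 < ε₀ := lt_min one_pos (by positivity)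
  have hlower : ∀ ε, 0 < ε → ε ≤ ε₀ → ∀ t ∈ Icc α β, -ε < f t := by
    intro ε hε hεle
    refine barrier_gt (F := fun t => v t (f t)) hαβ hfd (by rw [hfβ]; linarith) ?_
    intro t ht hft
    have hε1 : ε ≤ 1 := hεle.trans (min_le_left _ _)
    have hεσ : ε ≤ 1/σ := hεle.trans (min_le_right _ _)
    have hπe : π (-ε) = -ε := by
      simp only [hπ]
      rw [min_eq_left (by linarith), max_eq_right (by linarith)]
    show v t (f t) < 0
    rw [hft]
    simp only [hv, hπe]
    have hrt := hr1 t (Ico_subset_Icc_self ht)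
    have hσε : ε * σ ≤ 1 := (le_div_iff₀ hσ).mp hεσ
    have hsq : σ^2 * ε^2 ≤ 1 := by nlinarith [mul_pos hσ hε]
    nlinarith [mul_pos ha hε]
  have hf0 : ∀ t ∈ Icc α β, 0 ≤ f t := by
    intro t ht
    by_contra hneg; push_neg at hneg
    have hε : 0 < min ε₀ (-(f t)/2) := lt_min hε₀ (by linarith)
    have h1 := hlower _ hε (min_le_left _ _) t ht
    have h2 : min ε₀ (-(f t)/2) ≤ -(f t)/2 := min_le_right _ _
    linarith
  have hfd' : ∀ t ∈ Icc α β, HasDerivWithinAt f (σ ^ 2 / 2 * f t ^ 2 + a * f t - r t)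
      (Icc α β) t := by
    intro t ht
    have hπf : π (f t) = f t := by
      simp only [hπ]
      rw [min_eq_left (by linarith [hfc t ht]), max_eq_right (by linarith [hf0 t ht])]
    have h := hfd t ht
    have heq : v t (f t) = σ ^ 2 / 2 * f t ^ 2 + a * f t - r t := by
      simp only [hv, hπf]
    rwa [heq] at h
  have hpos : ∀ t ∈ Ico α β, 0 < f t := by
    intro t ht
    rcases (hf0 t (Ico_subset_Icc_self ht)).lt_or_eq with h | h
    · exact h
    · exfalso
      have hd0 := hfd' t (Ico_subset_Icc_self ht)
      rw [← h] at hd0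
      have hge := deriv_nonneg_of_min ht.2 ht.1 hd0
        (fun x hx => by rw [← h]; exact hf0 x ⟨ht.1.trans hx.1.le, hx.2⟩)
      have hrt := hr1 t (Ico_subset_Icc_self ht)
      nlinarith
  exact ⟨f, hfβ, hfd', hf0, hpos⟩

lemma riccati_unique {a σ : ℝ} {α β : ℝ} (hαβ : α ≤ β) {r f g : ℝ → ℝ}
    (hf : ∀ t ∈ Icc α β, HasDerivWithinAt f (σ ^ 2 / 2 * f t ^ 2 + a * f t - r t) (Icc α β) t)
    (hg : ∀ t ∈ Icc α β, HasDerivWithinAt g (σ ^ 2 / 2 * g t ^ 2 + a * g t - r t) (Icc α β) t)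
    (hβ : f β = g β) : ∀ t ∈ Icc α β, f t = g t := by
  have hfc : ContinuousOn f (Icc α β) := fun t ht => (hf t ht).continuousWithinAt
  have hgc : ContinuousOn g (Icc α β) := fun t ht => (hg t ht).continuousWithinAt
  obtain ⟨Bf, hBf⟩ := isCompact_Icc.exists_bound_of_continuousOn hfc
  obtain ⟨Bg, hBg⟩ := isCompact_Icc.exists_bound_of_continuousOn hgc
  set B : ℝ := max 0 (max Bf Bg) with hBdef
  have hB0 : 0 ≤ B := le_max_left _ _
  have hfB : ∀ t ∈ Icc α β, |f t| ≤ B := fun t ht => by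
    have := hBf t ht; rw [Real.norm_eq_abs] at this
    exact this.trans ((le_max_left _ _).trans (le_max_right _ _))
  have hgB : ∀ t ∈ Icc α β, |g t| ≤ B := fun t ht => by
    have := hBg t ht; rw [Real.norm_eq_abs] at this
    exact this.trans ((le_max_right _ _).trans (le_max_right _ _))
  set Kr : ℝ := σ^2 * B + |a| with hKrdef
  have hKr0 : 0 ≤ Kr := by positivity
  set K : NNReal := Real.toNNReal Kr with hKdef
  have hKco : (K : ℝ) = Kr := Real.coe_toNNReal _ hKr0
  set v : ℝ → ℝ → ℝ := fun t x => σ ^ 2 / 2 * x ^ 2 + a * x - r t with hv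
  have hlip : ∀ t, LipschitzOnWith K (v t) (Metric.closedBall (0:ℝ) B) := by
    intro t
    apply LipschitzOnWith.of_dist_le_mul
    intro x hx y hy
    rw [Real.dist_eq, Real.dist_eq, hKco]
    rw [Metric.mem_closedBall, Real.dist_eq, sub_zero] at hx hy
    have hxy : v t x - v t y = (x - y) * (σ^2/2 * (x + y) + a) := by simp only [hv]; ring
    rw [hxy, abs_mul]
    have h1 : |σ^2/2 * (x + y) + a| ≤ Kr := by
      have habs : |x + y| ≤ 2*B := (abs_add_le _ _).trans (by linarith)
      calc |σ^2/2 * (x + y) + a| ≤ |σ^2/2 * (x + y)| + |a| := abs_add_le _ _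
        _ = σ^2/2 * |x + y| + |a| := by
            rw [abs_mul, abs_of_nonneg (by positivity : (0:ℝ) ≤ σ^2/2)]
        _ ≤ Kr := by rw [hKrdef]; nlinarith [sq_nonneg σ]
    exact (mul_le_mul (le_refl _) h1 (abs_nonneg _) (abs_nonneg _)).trans
      (le_of_eq (mul_comm _ _))
  have hmem : ∀ t ∈ Ioc α β, Icc α β ∈ 𝓝[Iic t] t := by
    intro t ht
    rw [mem_nhdsWithin]
    exact ⟨Ioi α, isOpen_Ioi, ht.1, fun x hx => ⟨hx.1.le, hx.2.trans ht.2⟩⟩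
  have hueq := ODE_solution_unique_of_mem_Icc_left (v := v)
    (s := fun _ => Metric.closedBall (0:ℝ) B) (K := K) (fun _ _ => hlip _)
    hfc
    (fun t ht => (hf t (Ioc_subset_Icc_self ht)).mono_of_mem_nhdsWithin (hmem t ht))
    (fun t ht => by
      rw [Metric.mem_closedBall, Real.dist_eq, sub_zero]
      exact hfB t (Ioc_subset_Icc_self ht))
    hgc
    (fun t ht => (hg t (Ioc_subset_Icc_self ht)).mono_of_mem_nhdsWithin (hmem t ht))
    (fun t ht => by
      rw [Metric.mem_closedBall, Real.dist_eq, sub_zero]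
      exact hgB t (Ioc_subset_Icc_self ht))
    hβ
  exact fun t ht => hueq ht

def riccatiDom' (T τ : ℝ) (j : ℕ) : Set ℝ :=
  Set.Icc (T - ((j : ℝ) + 1) * τ) (T - (j : ℝ) * τ)

def SolN (a b σ τ T w : ℝ) (n : ℕ) (φ : ℕ → ℝ → ℝ) : Prop :=
  φ 0 T = w ∧
  (∀ t ∈ riccatiDom' T τ 0, HasDerivWithinAt (φ 0)
    (σ ^ 2 / 2 * (φ 0 t) ^ 2 + a * φ 0 t - 1) (riccatiDom' T τ 0) t) ∧
  (∀ j : ℕ, j < n → φ (j + 1) (T - ((j : ℝ) + 1) * τ) = φ j (T - ((j : ℝ) + 1) * τ)) ∧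
  (∀ j : ℕ, j < n → ∀ t ∈ riccatiDom' T τ (j + 1), HasDerivWithinAt (φ (j + 1))
    (σ ^ 2 / 2 * (φ (j + 1) t) ^ 2 + a * φ (j + 1) t - 1 - b * φ j (t + τ))
    (riccatiDom' T τ (j + 1)) t)

lemma domeq0 (T τ : ℝ) : riccatiDom' T τ 0 = Icc (T - τ) T := by
  unfold riccatiDom'; norm_num

lemma domeqS (T τ : ℝ) (j : ℕ) :
    riccatiDom' T τ (j + 1) = Icc (T - (((j:ℝ) + 1) + 1) * τ) (T - ((j:ℝ) + 1) * τ) := by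
  unfold riccatiDom'
  congr 1 <;> push_cast <;> ring

lemma domshift {T τ : ℝ} (j : ℕ) {s : ℝ} (hs : s ∈ riccatiDom' T τ (j + 1)) :
    s + τ ∈ riccatiDom' T τ j := by
  rw [domeqS] at hs
  unfold riccatiDom'
  obtain ⟨h1, h2⟩ := hs
  constructor <;> nlinarith [h1, h2]

lemma memleft {T τ : ℝ} (hτ : 0 < τ) (j : ℕ) :
    T - ((j:ℝ) + 1) * τ ∈ riccatiDom' T τ j := by
  unfold riccatiDom'
  constructor
  · exact le_refl _
  · nlinarith

lemma SolN.cont {a b σ τ T w : ℝ} {n : ℕ} {φ : ℕ → ℝ → ℝ}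
    (h : SolN a b σ τ T w n φ) : ∀ j ≤ n, ContinuousOn (φ j) (riccatiDom' T τ j) := by
  intro j hj
  cases j with
  | zero => exact fun t ht => (h.2.1 t ht).continuousWithinAt
  | succ m => exact fun t ht => (h.2.2.2 m (by omega) t ht).continuousWithinAt

lemma SolN.unique {a b σ τ T w : ℝ} (hτ : 0 < τ) {n : ℕ} {φ φ' : ℕ → ℝ → ℝ}
    (h : SolN a b σ τ T w n φ) (h' : SolN a b σ τ T w n φ') :
    ∀ j ≤ n, ∀ t ∈ riccatiDom' T τ j, φ j t = φ' j t := by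
  intro j
  induction j with
  | zero =>
    intro _ t ht
    rw [domeq0] at ht
    refine riccati_unique (a := a) (σ := σ) (α := T - τ) (β := T)
      (r := fun _ => (1:ℝ)) (by linarith) ?_ ?_ ?_ t ht
    · intro s hs
      have hd := h.2.1 s (by rwa [domeq0])
      rwa [domeq0] at hd
    · intro s hs
      have hd := h'.2.1 s (by rwa [domeq0])
      rwa [domeq0] at hd
    · rw [h.1, h'.1]
  | succ j ih =>
    intro hj1 t ht
    have hjn : j < n := by omega
    have IH := ih (by omega)
    have hdom := domeqS T τ j
    rw [hdom] at ht
    have hαβ : T - (((j:ℝ) + 1) + 1) * τ ≤ T - ((j:ℝ) + 1) * τ := by nlinarith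
    have hβmem : T - ((j:ℝ) + 1) * τ ∈ riccatiDom' T τ j := memleft hτ j
    refine riccati_unique (a := a) (σ := σ)
      (r := fun s => 1 + b * φ j (s + τ)) hαβ ?_ ?_ ?_ t ht
    · intro s hs
      have hd : HasDerivWithinAt (φ (j+1))
          (σ ^ 2 / 2 * (φ (j+1) s) ^ 2 + a * φ (j+1) s - 1 - b * φ j (s + τ))
          (riccatiDom' T τ (j+1)) s := h.2.2.2 j hjn s (by rwa [hdom])
      rw [hdom] at hd
      have heq : σ ^ 2 / 2 * (φ (j+1) s) ^ 2 + a * φ (j+1) s - 1 - b * φ j (s + τ)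
          = σ ^ 2 / 2 * (φ (j+1) s) ^ 2 + a * φ (j+1) s - (1 + b * φ j (s + τ)) := by ring
      rw [heq] at hd
      exact hd
    · intro s hs
      have hsd : s ∈ riccatiDom' T τ (j + 1) := by rwa [hdom]
      have hd : HasDerivWithinAt (φ' (j+1))
          (σ ^ 2 / 2 * (φ' (j+1) s) ^ 2 + a * φ' (j+1) s - 1 - b * φ' j (s + τ))
          (riccatiDom' T τ (j+1)) s := h'.2.2.2 j hjn s hsd
      rw [hdom] at hd
      have hmem := domshift j hsd
      have heq : σ ^ 2 / 2 * (φ' (j+1) s) ^ 2 + a * φ' (j+1) s - 1 - b * φ' j (s + τ)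
          = σ ^ 2 / 2 * (φ' (j+1) s) ^ 2 + a * φ' (j+1) s - (1 + b * φ j (s + τ)) := by
        rw [← IH (s + τ) hmem]; ring
      rw [heq] at hd
      exact hd
    · rw [h.2.2.1 j hjn, h'.2.2.1 j hjn]
      exact IH _ hβmem

lemma SolN.exists_sol {a b σ τ T w : ℝ} (ha : 0 < a) (hσ : 0 < σ) (hb : 0 ≤ b)
    (hτ : 0 < τ) (hw0 : 0 ≤ w) :
    ∀ n : ℕ, ∃ φ : ℕ → ℝ → ℝ, SolN a b σ τ T w n φ ∧
      ∀ j ≤ n, ∀ t ∈ riccatiDom' T τ j, 0 ≤ φ j t ∧ (t < T → 0 < φ j t) := by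
  intro n
  induction n with
  | zero =>
    obtain ⟨f, hfβ, hfd, hf0, hfpos⟩ := riccati_step (r := fun _ => (1:ℝ)) ha hσ
      (show T - τ < T by linarith) continuousOn_const (fun t _ => le_refl 1) hw0
    refine ⟨fun _ => f, ⟨hfβ, ?_, ?_, ?_⟩, ?_⟩
    · intro t ht
      rw [domeq0] at ht ⊢
      exact hfd t ht
    · intro j hj; omega
    · intro j hj; omega
    · intro j hj t ht
      have hj0 : j = 0 := by omega
      subst hj0
      rw [domeq0] at ht
      exact ⟨hf0 t ht, fun hT => hfpos t ⟨ht.1, hT⟩⟩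
  | succ n ih =>
    obtain ⟨v, hSol, hposall⟩ := ih
    have hdom := domeqS T τ n
    have hαβ : T - (((n:ℝ) + 1) + 1) * τ < T - ((n:ℝ) + 1) * τ := by nlinarith
    have hshift : ∀ s ∈ Icc (T - (((n:ℝ) + 1) + 1) * τ) (T - ((n:ℝ) + 1) * τ),
        s + τ ∈ riccatiDom' T τ n := fun s hs => domshift n (by rwa [hdom])
    have hcontvn : ContinuousOn (v n) (riccatiDom' T τ n) := hSol.cont n le_rfl
    have hrc : ContinuousOn (fun s => 1 + b * v n (s + τ))
        (Icc (T - (((n:ℝ) + 1) + 1) * τ) (T - ((n:ℝ) + 1) * τ)) := by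
      refine continuousOn_const.add (continuousOn_const.mul ?_)
      exact hcontvn.comp ((continuous_add_right τ).continuousOn) hshift
    have hr1 : ∀ s ∈ Icc (T - (((n:ℝ) + 1) + 1) * τ) (T - ((n:ℝ) + 1) * τ),
        1 ≤ 1 + b * v n (s + τ) := by
      intro s hs
      have h0 := (hposall n le_rfl _ (hshift s hs)).1
      nlinarith
    have hβT : T - ((n:ℝ) + 1) * τ < T := by
      have : 0 < ((n:ℝ) + 1) * τ := by positivity
      linarith
    have hβdom : T - ((n:ℝ) + 1) * τ ∈ riccatiDom' T τ n := memleft hτ n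
    have hvβ : 0 < v n (T - ((n:ℝ) + 1) * τ) := (hposall n le_rfl _ hβdom).2 hβT
    obtain ⟨f, hfβ, hfd, hf0, hfpos⟩ := riccati_step (r := fun s => 1 + b * v n (s + τ))
      ha hσ hαβ hrc hr1 hvβ.le
    refine ⟨Function.update v (n+1) f, ⟨?_, ?_, ?_, ?_⟩, ?_⟩
    · rw [Function.update_of_ne (by omega : (0:ℕ) ≠ n+1)]
      exact hSol.1
    · rw [Function.update_of_ne (by omega : (0:ℕ) ≠ n+1)]
      exact hSol.2.1
    · intro j hj
      rcases Nat.lt_or_ge j n with hlt | hge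
      · rw [Function.update_of_ne (by omega : j+1 ≠ n+1),
          Function.update_of_ne (by omega : j ≠ n+1)]
        exact hSol.2.2.1 j hlt
      · have hjn : j = n := by omega
        subst hjn
        rw [Function.update_self, Function.update_of_ne (by omega : j ≠ j+1)]
        exact hfβ
    · intro j hj t ht
      rcases Nat.lt_or_ge j n with hlt | hge
      · simp only [Function.update_of_ne (by omega : j+1 ≠ n+1),
          Function.update_of_ne (by omega : j ≠ n+1)]
        exact hSol.2.2.2 j hlt t ht
      · have hjn : j = n := by omega
        subst hjn
        simp only [Function.update_self, Function.update_of_ne (by omega : j ≠ j+1)]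
        rw [hdom] at ht
        have hd : HasDerivWithinAt f
            (σ ^ 2 / 2 * f t ^ 2 + a * f t - (1 + b * v j (t + τ)))
            (Icc (T - (((j:ℝ) + 1) + 1) * τ) (T - ((j:ℝ) + 1) * τ)) t := hfd t ht
        have heq : σ ^ 2 / 2 * f t ^ 2 + a * f t - (1 + b * v j (t + τ))
            = σ ^ 2 / 2 * f t ^ 2 + a * f t - 1 - b * v j (t + τ) := by ring
        rw [heq] at hd
        rw [hdom]
        exact hd
    · intro j hj t ht
      rcases Nat.lt_or_ge j (n+1) with hlt | hge
      · rw [Function.update_of_ne (by omega : j ≠ n+1)]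
        exact hposall j (by omega) t ht
      · have hjn : j = n + 1 := by omega
        subst hjn
        rw [Function.update_self]
        rw [hdom] at ht
        refine ⟨hf0 t ht, fun _ => ?_⟩
        rcases lt_or_eq_of_le ht.2 with hlt' | heq'
        · exact hfpos t ⟨ht.1, hlt'⟩
        · rw [heq']
          rw [hfβ]
          exact hvβ

end RiccatiAux

/-- for a, σ > 0, b ≥ 0, τ > 0 and 0 ≤ w < (k(0)−a)/σ²
(k(0) = √(a²+2σ²)), the recursive delayed Riccati system has a unique solution;
each component is nonnegative on its domain and positive for t < T. -/
theorem delayed_riccati_existence_uniqueness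
    (a b σ τ T w : ℝ) (ha : 0 < a) (hσ : 0 < σ) (hb : 0 ≤ b) (hτ : 0 < τ)
    (hw : w ∈ Set.Ico (0 : ℝ) ((Real.sqrt (a ^ 2 + 2 * σ ^ 2) - a) / σ ^ 2)) :
    ∃ φ : ℕ → ℝ → ℝ,
      DelayedRiccatiSol a b σ τ T w φ ∧
      (∀ j : ℕ, ∀ t ∈ riccatiDom T τ j, 0 ≤ φ j t ∧ (t < T → 0 < φ j t)) ∧
      (∀ φ' : ℕ → ℝ → ℝ, DelayedRiccatiSol a b σ τ T w φ' →
        ∀ j : ℕ, ∀ t ∈ riccatiDom T τ j, φ' j t = φ j t) := by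
  obtain ⟨hw0, -⟩ := hw
  have key := SolN.exists_sol (a := a) (b := b) (T := T) (w := w) ha hσ hb hτ hw0
  choose Ψ hΨsol hΨpos using key
  have hmono : ∀ (m n : ℕ), m ≤ n → ∀ ψ, SolN a b σ τ T w n ψ → SolN a b σ τ T w m ψ :=
    fun m n hmn ψ h =>
      ⟨h.1, h.2.1, fun j hj => h.2.2.1 j (by omega), fun j hj => h.2.2.2 j (by omega)⟩
  refine ⟨fun j => Ψ j j, ⟨?_, ?_, ?_, ?_⟩, ?_, ?_⟩
  · exact (hΨsol 0).1
  · intro t ht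
    exact (hΨsol 0).2.1 t ht
  · intro j
    have h1 := (hΨsol (j+1)).2.2.1 j (by omega)
    have hpt : T - ((j:ℝ) + 1) * τ ∈ riccatiDom' T τ j := memleft hτ j
    have h2 := SolN.unique hτ (hmono j (j+1) (by omega) _ (hΨsol (j+1))) (hΨsol j)
      j le_rfl _ hpt
    show Ψ (j+1) (j+1) (T - ((j:ℝ) + 1) * τ) = Ψ j j (T - ((j:ℝ) + 1) * τ)
    rw [h1, h2]
  · intro j t ht
    have ht' : t ∈ riccatiDom' T τ (j+1) := ht
    have hd := (hΨsol (j+1)).2.2.2 j (by omega) t ht'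
    have hmem := domshift j ht'
    have h2 : Ψ (j+1) j (t+τ) = Ψ j j (t+τ) :=
      SolN.unique hτ (hmono j (j+1) (by omega) _ (hΨsol (j+1))) (hΨsol j) j le_rfl _ hmem
    rw [h2] at hd
    exact hd
  · intro j t ht
    exact hΨpos j j le_rfl t ht
  · intro φ' hφ' j t ht
    have hs' : SolN a b σ τ T w j φ' :=
      ⟨hφ'.1, hφ'.2.1, fun i _ => hφ'.2.2.1 i, fun i _ => hφ'.2.2.2 i⟩
    exact SolN.unique hτ hs' (hΨsol j) j le_rfl t ht
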